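/- Let ε_1, Y_2, ε_3 be mutually independent unit-Fréchet random variables, i.e. P(Y_2 ≤ x) = exp(−1/x) for x > 0 (and similarly for ε_1, ε_3), and define Y_1 = max(Y_2, ε_1)/2 and Y_3 = max(Y_2, ε_3)/2. Then: (i) Y_1 is unit-Fréchet, i.e. P(Y_1 ≤ x) = exp(−1/x) for all x > 0; (ii) lim_{t→∞} t · P(Y_1 > t and Y_2 > t) = 1/2; and (iii) lim_{t→∞} t · P(Y_1 > t and Y_3 > t) = 1/2. -/

import Mathlib

open MeasureTheory ProbabilityTheory Filter

/-- `(exp s - 1)/s → 1` as `s → 0`, `s ≠ 0`. -/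
lemma aux_exp_slope :
    Tendsto (fun s : ℝ => (Real.exp s - 1) / s) (nhdsWithin 0 {(0:ℝ)}ᶜ) (nhds 1) := by
  have h := (Real.hasDerivAt_exp 0)
  rw [hasDerivAt_iff_tendsto_slope] at h
  simpa [slope_fun_def_field, Real.exp_zero] using h

/-- Key limit: `t (1 - exp(-1/(c t))) → 1/c` as `t → ∞`. -/
lemma aux_tendsto (c : ℝ) (hc : 0 < c) :
    Tendsto (fun t : ℝ => t * (1 - Real.exp (-1 / (c * t)))) atTop (nhds (1 / c)) := by
  have hmap : Tendsto (fun t : ℝ => -1 / (c * t)) atTop (nhdsWithin 0 {(0:ℝ)}ᶜ) := by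
    rw [tendsto_nhdsWithin_iff]
    constructor
    · have hct : Tendsto (fun t : ℝ => c * t) atTop atTop :=
        Tendsto.const_mul_atTop hc tendsto_id
      have := hct.inv_tendsto_atTop
      have h2 : Tendsto (fun t : ℝ => -(c * t)⁻¹) atTop (nhds (-0)) := this.neg
      simpa [neg_div, one_div] using h2
    · filter_upwards [eventually_gt_atTop (0:ℝ)] with t ht
      have : 0 < c * t := mul_pos hc ht
      simp only [Set.mem_compl_iff, Set.mem_singleton_iff]
      have h1 : (0:ℝ) < 1 / (c * t) := by positivity
      rw [neg_div]
      exact ne_of_lt (by linarith)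
  have h := (aux_exp_slope.comp hmap).const_mul (1 / c)
  rw [mul_one] at h
  apply h.congr'
  filter_upwards [eventually_gt_atTop (0:ℝ)] with t ht
  have hct : (c * t) ≠ 0 := by positivity
  simp only [Function.comp_apply]
  field_simp
  ring

/-- `μ {x < X} = 1 - e` when `μ {X ≤ x} = e`. -/
lemma aux_compl {Ω : Type*} [MeasurableSpace Ω] (μ : Measure Ω) [IsProbabilityMeasure μ]
    {X : Ω → ℝ} (hX : Measurable X) {x e : ℝ}
    (h : μ {ω | X ω ≤ x} = ENNReal.ofReal e) (he0 : 0 ≤ e) :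
    μ {ω | x < X ω} = ENNReal.ofReal (1 - e) := by
  have hs : MeasurableSet {ω | X ω ≤ x} := hX measurableSet_Iic
  have : {ω | x < X ω} = {ω | X ω ≤ x}ᶜ := by
    ext ω; simp [not_le]
  rw [this, prob_compl_eq_one_sub hs, h, ENNReal.ofReal_sub 1 he0, ENNReal.ofReal_one]

theorem markov_tree_counterexample
    {Ω : Type*} [MeasurableSpace Ω] (μ : Measure Ω) [IsProbabilityMeasure μ]
    (ε₁ Y₂ ε₃ : Ω → ℝ)
    (hmeas₁ : Measurable ε₁) (hmeas₂ : Measurable Y₂) (hmeas₃ : Measurable ε₃)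
    (hFr₁ : ∀ x : ℝ, 0 < x → μ {ω | ε₁ ω ≤ x} = ENNReal.ofReal (Real.exp (-1 / x)))
    (hFr₁0 : μ {ω | ε₁ ω ≤ 0} = 0)
    (hFr₂ : ∀ x : ℝ, 0 < x → μ {ω | Y₂ ω ≤ x} = ENNReal.ofReal (Real.exp (-1 / x)))
    (hFr₂0 : μ {ω | Y₂ ω ≤ 0} = 0)
    (hFr₃ : ∀ x : ℝ, 0 < x → μ {ω | ε₃ ω ≤ x} = ENNReal.ofReal (Real.exp (-1 / x)))
    (hFr₃0 : μ {ω | ε₃ ω ≤ 0} = 0)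
    (hind : iIndepFun ![ε₁, Y₂, ε₃] μ) :
    (∀ x : ℝ, 0 < x →
        μ {ω | max (Y₂ ω) (ε₁ ω) / 2 ≤ x} = ENNReal.ofReal (Real.exp (-1 / x))) ∧
      Tendsto (fun t : ℝ => t *
          (μ {ω | t < max (Y₂ ω) (ε₁ ω) / 2 ∧ t < Y₂ ω}).toReal)
        atTop (nhds (1 / 2)) ∧
      Tendsto (fun t : ℝ => t *
          (μ {ω | t < max (Y₂ ω) (ε₁ ω) / 2 ∧ t < max (Y₂ ω) (ε₃ ω) / 2}).toReal)
        atTop (nhds (1 / 2)) := by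
  -- pairwise independence
  have hI12 : IndepFun ε₁ Y₂ μ := by
    have := hind.indepFun (show (0 : Fin 3) ≠ 1 by decide)
    simpa using this
  -- notation
  set a : ℝ → ℝ := fun t => Real.exp (-1 / (2 * t)) with ha_def
  set b : ℝ → ℝ := fun t => Real.exp (-1 / t) with hb_def
  have ha_pos : ∀ t, 0 < a t := fun t => Real.exp_pos _
  have hb_pos : ∀ t, 0 < b t := fun t => Real.exp_pos _
  have ha_le_one : ∀ t : ℝ, 0 < t → a t ≤ 1 := by
    intro t ht
    rw [ha_def]
    apply Real.exp_le_one_iff.mpr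
    rw [neg_div]
    simp only [neg_nonpos]
    positivity
  have hb_le_a : ∀ t : ℝ, 0 < t → b t ≤ a t := by
    intro t ht
    apply Real.exp_le_exp.mpr
    rw [neg_div, neg_div, neg_le_neg_iff]
    rw [div_le_div_iff₀ (by positivity) ht]
    nlinarith
  -- Part (i)
  have part1 : ∀ x : ℝ, 0 < x →
      μ {ω | max (Y₂ ω) (ε₁ ω) / 2 ≤ x} = ENNReal.ofReal (Real.exp (-1 / x)) := by
    intro x hx
    have hset : {ω | max (Y₂ ω) (ε₁ ω) / 2 ≤ x}
        = ε₁ ⁻¹' Set.Iic (2 * x) ∩ Y₂ ⁻¹' Set.Iic (2 * x) := by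
      ext ω
      simp only [Set.mem_setOf_eq, Set.mem_inter_iff, Set.mem_preimage, Set.mem_Iic,
        div_le_iff₀ (by norm_num : (0:ℝ) < 2), max_le_iff]
      constructor
      · rintro ⟨h1, h2⟩; exact ⟨by linarith, by linarith⟩
      · rintro ⟨h1, h2⟩; exact ⟨by linarith, by linarith⟩
    rw [hset, hI12.measure_inter_preimage_eq_mul _ _ measurableSet_Iic measurableSet_Iic]
    have h1 : μ (ε₁ ⁻¹' Set.Iic (2 * x)) = ENNReal.ofReal (Real.exp (-1 / (2 * x))) :=
      hFr₁ (2 * x) (by positivity)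
    have h2 : μ (Y₂ ⁻¹' Set.Iic (2 * x)) = ENNReal.ofReal (Real.exp (-1 / (2 * x))) :=
      hFr₂ (2 * x) (by positivity)
    rw [h1, h2, ← ENNReal.ofReal_mul (Real.exp_pos _).le, ← Real.exp_add]
    congr 1
    field_simp
    ring
  -- measures of upper tails
  have hgt₂ : ∀ t : ℝ, 0 < t → μ {ω | 2 * t < Y₂ ω} = ENNReal.ofReal (1 - a t) :=
    fun t ht => aux_compl μ hmeas₂ (hFr₂ (2 * t) (by positivity)) (Real.exp_pos _).le
  have hgt₁ : ∀ t : ℝ, 0 < t → μ {ω | 2 * t < ε₁ ω} = ENNReal.ofReal (1 - a t) :=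
    fun t ht => aux_compl μ hmeas₁ (hFr₁ (2 * t) (by positivity)) (Real.exp_pos _).le
  have hgt₃ : ∀ t : ℝ, 0 < t → μ {ω | 2 * t < ε₃ ω} = ENNReal.ofReal (1 - a t) :=
    fun t ht => aux_compl μ hmeas₃ (hFr₃ (2 * t) (by positivity)) (Real.exp_pos _).le
  -- μ(t < Y₂ ≤ 2t)
  have hIoc : ∀ t : ℝ, 0 < t →
      μ (Y₂ ⁻¹' Set.Ioc t (2 * t)) = ENNReal.ofReal (a t - b t) := by
    intro t ht
    have hdiff : Y₂ ⁻¹' Set.Ioc t (2 * t) = Y₂ ⁻¹' Set.Iic (2 * t) \ Y₂ ⁻¹' Set.Iic t := by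
      ext ω
      simp only [Set.mem_preimage, Set.mem_Ioc, Set.mem_diff, Set.mem_Iic, not_le]
      tauto
    rw [hdiff, measure_diff (fun ω hω => by
        simp only [Set.mem_preimage, Set.mem_Iic] at *; linarith)
      ((hmeas₂ measurableSet_Iic).nullMeasurableSet) (measure_ne_top μ _)]
    have h1 : μ (Y₂ ⁻¹' Set.Iic (2 * t)) = ENNReal.ofReal (a t) := hFr₂ (2 * t) (by positivity)
    have h2 : μ (Y₂ ⁻¹' Set.Iic t) = ENNReal.ofReal (b t) := hFr₂ t ht
    rw [h1, h2, ← ENNReal.ofReal_sub _ (hb_pos t).le]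
  -- Part (ii) measure formula
  have meas2 : ∀ t : ℝ, 0 < t →
      μ {ω | t < max (Y₂ ω) (ε₁ ω) / 2 ∧ t < Y₂ ω}
        = ENNReal.ofReal ((1 - a t) + (a t - b t) * (1 - a t)) := by
    intro t ht
    have hset : {ω | t < max (Y₂ ω) (ε₁ ω) / 2 ∧ t < Y₂ ω}
        = {ω | 2 * t < Y₂ ω} ∪ (Y₂ ⁻¹' Set.Ioc t (2 * t) ∩ ε₁ ⁻¹' Set.Ioi (2 * t)) := by
      ext ω
      simp only [Set.mem_setOf_eq, Set.mem_union, Set.mem_inter_iff, Set.mem_preimage,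
        Set.mem_Ioc, Set.mem_Ioi, lt_div_iff₀ (by norm_num : (0:ℝ) < 2), lt_max_iff]
      constructor
      · rintro ⟨h1 | h1, h2⟩
        · left; linarith
        · rcases le_or_gt (Y₂ ω) (2 * t) with h3 | h3
          · right; exact ⟨⟨h2, h3⟩, by linarith⟩
          · left; exact h3
      · rintro (h1 | ⟨⟨h1, h2⟩, h3⟩)
        · exact ⟨Or.inl (by linarith), by linarith⟩
        · exact ⟨Or.inr (by linarith), h1⟩
    have hdisj : Disjoint {ω | 2 * t < Y₂ ω}
        (Y₂ ⁻¹' Set.Ioc t (2 * t) ∩ ε₁ ⁻¹' Set.Ioi (2 * t)) := by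
      rw [Set.disjoint_left]
      rintro ω h1 ⟨h2, _⟩
      simp only [Set.mem_setOf_eq] at h1
      simp only [Set.mem_preimage, Set.mem_Ioc] at h2
      linarith [h2.2]
    rw [hset, measure_union hdisj
      ((hmeas₂ measurableSet_Ioc).inter (hmeas₁ measurableSet_Ioi))]
    have hB : μ (Y₂ ⁻¹' Set.Ioc t (2 * t) ∩ ε₁ ⁻¹' Set.Ioi (2 * t))
        = ENNReal.ofReal (a t - b t) * ENNReal.ofReal (1 - a t) := by
      rw [Set.inter_comm, hI12.measure_inter_preimage_eq_mul _ _
        measurableSet_Ioi measurableSet_Ioc]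
      have h1 : μ (ε₁ ⁻¹' Set.Ioi (2 * t)) = ENNReal.ofReal (1 - a t) := hgt₁ t ht
      rw [h1, hIoc t ht, mul_comm]
    rw [hgt₂ t ht, hB, ← ENNReal.ofReal_mul (by linarith [hb_le_a t ht]),
      ← ENNReal.ofReal_add (by linarith [ha_le_one t ht])
        (mul_nonneg (by linarith [hb_le_a t ht]) (by linarith [ha_le_one t ht]))]
  -- Part (iii) measure formula
  have meas3 : ∀ t : ℝ, 0 < t →
      μ {ω | t < max (Y₂ ω) (ε₁ ω) / 2 ∧ t < max (Y₂ ω) (ε₃ ω) / 2}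
        = ENNReal.ofReal ((1 - a t) + a t * ((1 - a t) * (1 - a t))) := by
    intro t ht
    have hset : {ω | t < max (Y₂ ω) (ε₁ ω) / 2 ∧ t < max (Y₂ ω) (ε₃ ω) / 2}
        = {ω | 2 * t < Y₂ ω} ∪
          (ε₁ ⁻¹' Set.Ioi (2 * t) ∩ Y₂ ⁻¹' Set.Iic (2 * t) ∩ ε₃ ⁻¹' Set.Ioi (2 * t)) := by
      ext ω
      simp only [Set.mem_setOf_eq, Set.mem_union, Set.mem_inter_iff, Set.mem_preimage,
        Set.mem_Iic, Set.mem_Ioi, lt_div_iff₀ (by norm_num : (0:ℝ) < 2), lt_max_iff]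
      constructor
      · rintro ⟨h1 | h1, h2 | h2⟩
        · left; linarith
        · left; linarith
        · left; linarith
        · rcases le_or_gt (Y₂ ω) (2 * t) with h3 | h3
          · right; exact ⟨⟨by linarith, h3⟩, by linarith⟩
          · left; exact h3
      · rintro (h1 | ⟨⟨h1, h2⟩, h3⟩)
        · exact ⟨Or.inl (by linarith), Or.inl (by linarith)⟩
        · exact ⟨Or.inr (by linarith), Or.inr (by linarith)⟩
    have hdisj : Disjoint {ω | 2 * t < Y₂ ω}
        (ε₁ ⁻¹' Set.Ioi (2 * t) ∩ Y₂ ⁻¹' Set.Iic (2 * t) ∩ ε₃ ⁻¹' Set.Ioi (2 * t)) := by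
      rw [Set.disjoint_left]
      rintro ω h1 ⟨⟨_, h2⟩, _⟩
      simp only [Set.mem_setOf_eq] at h1
      simp only [Set.mem_preimage, Set.mem_Iic] at h2
      linarith
    rw [hset, measure_union hdisj
      (((hmeas₁ measurableSet_Ioi).inter (hmeas₂ measurableSet_Iic)).inter
        (hmeas₃ measurableSet_Ioi))]
    -- triple independence
    have htriple : μ (ε₁ ⁻¹' Set.Ioi (2 * t) ∩ Y₂ ⁻¹' Set.Iic (2 * t) ∩ ε₃ ⁻¹' Set.Ioi (2 * t))
        = μ (ε₁ ⁻¹' Set.Ioi (2 * t)) * μ (Y₂ ⁻¹' Set.Iic (2 * t))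
          * μ (ε₃ ⁻¹' Set.Ioi (2 * t)) := by
      have key := (iIndepFun_iff_measure_inter_preimage_eq_mul.mp hind) Finset.univ
        (sets := ![Set.Ioi (2 * t), Set.Iic (2 * t), Set.Ioi (2 * t)])
        (by
          intro i _
          fin_cases i
          · exact measurableSet_Ioi
          · exact measurableSet_Iic
          · exact measurableSet_Ioi)
      have hiInter : (⋂ i ∈ Finset.univ, (![ε₁, Y₂, ε₃] i) ⁻¹'
            (![Set.Ioi (2 * t), Set.Iic (2 * t), Set.Ioi (2 * t)] i))
          = ε₁ ⁻¹' Set.Ioi (2 * t) ∩ Y₂ ⁻¹' Set.Iic (2 * t) ∩ ε₃ ⁻¹' Set.Ioi (2 * t) := by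
        ext ω
        simp [Fin.forall_fin_succ, and_assoc]
      rw [hiInter] at key
      rw [key, Fin.prod_univ_three]
      simp
    rw [htriple]
    have hY : μ (Y₂ ⁻¹' Set.Iic (2 * t)) = ENNReal.ofReal (a t) := hFr₂ (2 * t) (by positivity)
    have h1 : μ (ε₁ ⁻¹' Set.Ioi (2 * t)) = ENNReal.ofReal (1 - a t) := hgt₁ t ht
    have h3 : μ (ε₃ ⁻¹' Set.Ioi (2 * t)) = ENNReal.ofReal (1 - a t) := hgt₃ t ht
    have hnn1 : (0:ℝ) ≤ 1 - a t := by linarith [ha_le_one t ht]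
    rw [hgt₂ t ht, h1, h3, hY,
      ← ENNReal.ofReal_mul hnn1, ← ENNReal.ofReal_mul (mul_nonneg hnn1 (ha_pos t).le),
      ← ENNReal.ofReal_add hnn1 (mul_nonneg (mul_nonneg hnn1 (ha_pos t).le) hnn1)]
    congr 1
    ring
  -- limits
  have h2lim : Tendsto (fun t : ℝ => t * (1 - a t)) atTop (nhds (1 / 2)) := by
    simpa [ha_def] using aux_tendsto 2 (by norm_num)
  have h1lim : Tendsto (fun t : ℝ => t * (1 - b t)) atTop (nhds 1) := by
    have := aux_tendsto 1 (by norm_num)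
    simp only [one_mul, one_div, inv_one] at this
    simpa [hb_def] using this
  have hablim : Tendsto (fun t : ℝ => t * (a t - b t)) atTop (nhds (1 / 2)) := by
    have := h1lim.sub h2lim
    have heq : (fun t : ℝ => t * (1 - b t) - t * (1 - a t)) = fun t => t * (a t - b t) := by
      funext t; ring
    rw [heq] at this
    convert this using 2
    norm_num
  have halim : Tendsto a atTop (nhds 1) := by
    have hm : Tendsto (fun t : ℝ => -1 / (2 * t)) atTop (nhds 0) := by
      have hct : Tendsto (fun t : ℝ => 2 * t) atTop atTop :=
        Tendsto.const_mul_atTop (by norm_num) tendsto_id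
      have h2 : Tendsto (fun t : ℝ => -(2 * t)⁻¹) atTop (nhds (-0)) :=
        hct.inv_tendsto_atTop.neg
      simpa [neg_div, one_div] using h2
    have := (Real.continuous_exp.tendsto 0).comp hm
    simpa [ha_def, Real.exp_zero, Function.comp_def] using this
  have ha0lim : Tendsto (fun t : ℝ => 1 - a t) atTop (nhds 0) := by
    have h := halim.const_sub 1
    simpa using h
  refine ⟨part1, ?_, ?_⟩
  -- part (ii) limit
  · have hg : Tendsto (fun t : ℝ => t * (1 - a t) + t * (a t - b t) * (1 - a t))
        atTop (nhds (1 / 2)) := by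
      have := h2lim.add (hablim.mul ha0lim)
      simpa using this
    apply hg.congr'
    filter_upwards [eventually_gt_atTop (0:ℝ)] with t ht
    rw [meas2 t ht, ENNReal.toReal_ofReal (by
      have h1 : (0:ℝ) ≤ 1 - a t := by linarith [ha_le_one t ht]
      have h2 : (0:ℝ) ≤ a t - b t := by linarith [hb_le_a t ht]
      nlinarith)]
    ring
  -- part (iii) limit
  · have hg : Tendsto (fun t : ℝ => t * (1 - a t) + a t * (t * (1 - a t)) * (1 - a t))
        atTop (nhds (1 / 2)) := by
      have := h2lim.add ((halim.mul h2lim).mul ha0lim)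
      simpa using this
    apply hg.congr'
    filter_upwards [eventually_gt_atTop (0:ℝ)] with t ht
    rw [meas3 t ht, ENNReal.toReal_ofReal (by
      have h1 : (0:ℝ) ≤ 1 - a t := by linarith [ha_le_one t ht]
      nlinarith [(ha_pos t).le])]
    ring
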